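/- Let Q ∈ ℤ[x_1,…,x_n] be an integral polynomial and suppose there are constants β > 2 and C_0 ≥ 1 such that |F_q(a,0)| ≤ C_0 q^{−β} for every integer q ≥ 2 and every a ∈ U_q. Then there is a constant C', depending only on β and C_0, such that |V_λ(q)| ≤ C' q^{n−1} for every integer q ≥ 1 and every λ ∈ ℤ. -/

import Mathlib

open scoped BigOperators

noncomputable section

/-- `e(t) = e^{2πit}`. -/
def e2pi (t : ℝ) : ℂ := Complex.exp (2 * Real.pi * Complex.I * t)

/-- The normalized Weyl sum `F_d(a, 𝐚) = d^{-n} ∑_{s ∈ Z_d^n} e((a·Q(s) + s·𝐚)/d)`. -/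
def weylF (n : ℕ) (Q : MvPolynomial (Fin n) ℤ) (d : ℕ) (a : ℤ) (av : Fin n → ℤ) : ℂ :=
  ((d : ℂ) ^ n)⁻¹ *
    ∑ s : Fin n → Fin d,
      e2pi (((a * MvPolynomial.eval (fun i => ((s i : ℕ) : ℤ)) Q
        + ∑ i, ((s i : ℕ) : ℤ) * av i : ℤ) : ℝ) / (d : ℝ))

/-- `|V_λ(d)| = #{s ∈ (ℤ/dℤ)^n : Q(s) = λ}`. -/
def Vcard (n : ℕ) (Q : MvPolynomial (Fin n) ℤ) (d : ℕ) (lam : ℤ) : ℕ :=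
  Nat.card {s : Fin n → ZMod d //
    MvPolynomial.eval s (MvPolynomial.map (Int.castRingHom (ZMod d)) Q) = (lam : ZMod d)}

/-! ### Auxiliary lemmas about `e2pi` -/

lemma e2pi_add (x y : ℝ) : e2pi (x + y) = e2pi x * e2pi y := by
  simp [e2pi, mul_add, Complex.exp_add]

lemma e2pi_intCast (m : ℤ) : e2pi m = 1 := by
  have : (2 * Real.pi * Complex.I * (m:ℝ) : ℂ) = (m:ℤ) * (2 * Real.pi * Complex.I) := by
    push_cast; ring
  rw [e2pi, this, Complex.exp_int_mul, Complex.exp_eq_one_iff.mpr ⟨1, by ring⟩, one_zpow]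

lemma e2pi_nat_mul (a : ℕ) (t : ℝ) : e2pi (a * t) = e2pi t ^ a := by
  rw [e2pi, e2pi, show (2 * Real.pi * Complex.I * ((a:ℝ) * t : ℝ) : ℂ)
    = (a:ℕ) * (2 * Real.pi * Complex.I * t) by push_cast; ring, Complex.exp_nat_mul]

lemma norm_e2pi (t : ℝ) : ‖e2pi t‖ = 1 := by
  rw [e2pi, Complex.norm_exp]
  have : (2 * Real.pi * Complex.I * (t:ℝ) : ℂ).re = 0 := by simp
  rw [this, Real.exp_zero]

lemma e2pi_one_iff (x : ℝ) : e2pi x = 1 ↔ ∃ k : ℤ, x = k := by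
  rw [e2pi, Complex.exp_eq_one_iff]
  constructor
  · rintro ⟨k, hk⟩
    refine ⟨k, ?_⟩
    have h2 : (2 * Real.pi * Complex.I : ℂ) ≠ 0 := by
      simp [Real.pi_ne_zero, Complex.I_ne_zero]
    have : (x : ℂ) = (k : ℂ) := by
      have hk' : (x:ℂ) * (2 * Real.pi * Complex.I) = (k:ℂ) * (2 * Real.pi * Complex.I) := by
        rw [← hk]; ring
      exact mul_right_cancel₀ h2 hk'
    exact_mod_cast this
  · rintro ⟨k, rfl⟩; exact ⟨k, by push_cast; ring⟩

/-- Character (geometric) sum: `∑_{a<q} e(am/q)` is `q` if `q ∣ m` and `0` otherwise. -/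
lemma char_sum (q : ℕ) (hq : 0 < q) (m : ℤ) :
    ∑ a : Fin q, e2pi ((a : ℕ) * ((m : ℝ) / q)) = if (q:ℤ) ∣ m then (q:ℂ) else 0 := by
  have hsum : ∑ a : Fin q, e2pi ((a : ℕ) * ((m : ℝ) / q))
      = ∑ i ∈ Finset.range q, (e2pi ((m:ℝ)/q)) ^ i := by
    rw [Finset.sum_range fun i => (e2pi ((m:ℝ)/q)) ^ i]
    exact Finset.sum_congr rfl fun a _ => e2pi_nat_mul a _
  rw [hsum]
  by_cases hdvd : (q:ℤ) ∣ m
  · obtain ⟨k, rfl⟩ := hdvd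
    have : ((q*k : ℤ) : ℝ)/q = (k:ℤ) := by
      field_simp
      norm_cast
    rw [this, e2pi_intCast]
    simp
  · have hne : e2pi ((m:ℝ)/q) ≠ 1 := by
      intro h
      obtain ⟨k, hk⟩ := (e2pi_one_iff _).mp h
      apply hdvd
      refine ⟨k, ?_⟩
      have hq' : (q:ℝ) ≠ 0 := by positivity
      have : (m:ℝ) = q * k := by
        field_simp at hk; linarith [hk]
      exact_mod_cast this
    rw [geom_sum_eq hne]
    have : e2pi ((m:ℝ)/q) ^ q = 1 := by
      rw [← e2pi_nat_mul]
      have : (q:ℝ) * ((m:ℝ)/q) = (m:ℤ) := by field_simp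
      rw [this, e2pi_intCast]
    rw [this]
    simp [hdvd]

/-! ### Counting solutions via exponential sums -/

lemma eval_map_cast {n q : ℕ} (Q : MvPolynomial (Fin n) ℤ) (s : Fin n → ℤ) :
    MvPolynomial.eval (fun i => ((s i : ℤ) : ZMod q)) (MvPolynomial.map (Int.castRingHom (ZMod q)) Q)
      = ((MvPolynomial.eval s Q : ℤ) : ZMod q) := by
  rw [MvPolynomial.eval_map]
  exact (MvPolynomial.eval₂_comp_left (Int.castRingHom (ZMod q)) (RingHom.id ℤ) s Q).symm.trans (by simp)

lemma Vcard_eq_filter (n q : ℕ) (hq : 0 < q) (Q : MvPolynomial (Fin n) ℤ) (lam : ℤ) :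
    Vcard n Q q lam = (Finset.univ.filter (fun s : Fin n → Fin q =>
      (q:ℤ) ∣ (MvPolynomial.eval (fun i => ((s i : ℕ) : ℤ)) Q - lam))).card := by
  haveI : NeZero q := ⟨hq.ne'⟩
  classical
  have key : ∀ s : Fin n → Fin q,
      (MvPolynomial.eval (fun i => ((s i : ℕ) : ZMod q)) (MvPolynomial.map (Int.castRingHom (ZMod q)) Q)
        = (lam : ZMod q))
      ↔ (q:ℤ) ∣ (MvPolynomial.eval (fun i => ((s i : ℕ) : ℤ)) Q - lam) := by
    intro s
    have h1 : (fun i => ((s i : ℕ) : ZMod q)) = fun i => (((s i : ℕ) : ℤ) : ZMod q) := by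
      funext i; push_cast; rfl
    rw [h1, eval_map_cast, ← sub_eq_zero, ← Int.cast_sub, ZMod.intCast_zmod_eq_zero_iff_dvd]
  let c : (Fin n → Fin q) → (Fin n → ZMod q) := fun s i => ((s i : ℕ) : ZMod q)
  have hc : Function.Bijective c := by
    constructor
    · intro s t h
      funext i
      have := congrFun h i
      have h2 : ((s i : ℕ) : ZMod q).val = ((t i : ℕ) : ZMod q).val := congrArg ZMod.val this
      rwa [ZMod.val_natCast_of_lt (s i).2, ZMod.val_natCast_of_lt (t i).2, Fin.val_inj] at h2
    · intro f
      refine ⟨fun i => ⟨(f i).val, ZMod.val_lt _⟩, ?_⟩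
      funext i
      simp [c, ZMod.natCast_val, ZMod.cast_id]
  rw [Vcard]
  rw [Nat.card_eq_fintype_card]
  rw [← Fintype.card_subtype]
  let E : {s : Fin n → Fin q // (q:ℤ) ∣ (MvPolynomial.eval (fun i => ((s i : ℕ) : ℤ)) Q - lam)} ≃
      {s : Fin n → ZMod q // MvPolynomial.eval s (MvPolynomial.map (Int.castRingHom (ZMod q)) Q) = (lam : ZMod q)} :=
    ((Equiv.ofBijective c hc).subtypeEquiv (fun s => (key s).symm)).symm.symm
  exact (Fintype.card_congr E).symm

lemma weylF_zero_eq (n : ℕ) (Q : MvPolynomial (Fin n) ℤ) (q : ℕ) (hq : 0 < q) (a : ℕ) :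
    ((q:ℂ)^n) * weylF n Q q (a:ℕ) 0
      = ∑ s : Fin n → Fin q,
          e2pi ((((a:ℕ) * MvPolynomial.eval (fun i => ((s i : ℕ) : ℤ)) Q : ℤ) : ℝ) / q) := by
  rw [weylF, ← mul_assoc, mul_inv_cancel₀ (pow_ne_zero _ (Nat.cast_ne_zero.mpr hq.ne')), one_mul]
  refine Finset.sum_congr rfl fun s _ => ?_
  norm_num

lemma key1 (n q : ℕ) (hq : 0 < q) (Q : MvPolynomial (Fin n) ℤ) (lam : ℤ) :
    (Vcard n Q q lam : ℝ) * q ≤ (q:ℝ)^n * ∑ a : Fin q, ‖weylF n Q q (a:ℕ) 0‖ := by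
  classical
  set P : (Fin n → Fin q) → ℤ := fun s => MvPolynomial.eval (fun i => ((s i : ℕ) : ℤ)) Q with hP
  have h2 : ((Vcard n Q q lam : ℕ) : ℂ) * q
      = ∑ a : Fin q, ∑ s : Fin n → Fin q, e2pi ((((a:ℕ) * (P s - lam) : ℤ) : ℝ) / q) := by
    rw [Finset.sum_comm]
    have inner : ∀ s, ∑ a : Fin q, e2pi ((((a:ℕ) * (P s - lam) : ℤ):ℝ)/q)
        = if (q:ℤ) ∣ (P s - lam) then (q:ℂ) else 0 := by
      intro s
      rw [← char_sum q hq (P s - lam)]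
      refine Finset.sum_congr rfl fun a _ => ?_
      congr 1
      push_cast
      ring
    rw [Finset.sum_congr rfl fun s _ => inner s, ← Finset.sum_filter,
      Finset.sum_const, nsmul_eq_mul, Vcard_eq_filter n q hq Q lam]
  have h3 : ∀ a : Fin q, ∑ s : Fin n → Fin q, e2pi ((((a:ℕ) * (P s - lam) : ℤ):ℝ)/q)
      = e2pi (((-((a:ℕ) * lam) : ℤ):ℝ)/q) * ((q:ℂ)^n * weylF n Q q (a:ℕ) 0) := by
    intro a
    rw [weylF_zero_eq n Q q hq a, Finset.mul_sum]
    refine Finset.sum_congr rfl fun s _ => ?_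
    rw [← e2pi_add]
    congr 1
    push_cast
    ring
  have hnorm : (Vcard n Q q lam : ℝ) * q
      = ‖∑ a : Fin q, ∑ s : Fin n → Fin q, e2pi ((((a:ℕ) * (P s - lam) : ℤ):ℝ)/q)‖ := by
    rw [← h2]
    simp
  rw [hnorm]
  calc ‖∑ a : Fin q, ∑ s : Fin n → Fin q, e2pi ((((a:ℕ) * (P s - lam) : ℤ):ℝ)/q)‖
      ≤ ∑ a : Fin q, ‖∑ s : Fin n → Fin q, e2pi ((((a:ℕ) * (P s - lam) : ℤ):ℝ)/q)‖ :=
        norm_sum_le _ _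
    _ = ∑ a : Fin q, (q:ℝ)^n * ‖weylF n Q q (a:ℕ) 0‖ := by
        refine Finset.sum_congr rfl fun a _ => ?_
        rw [h3 a, norm_mul, norm_e2pi, one_mul, norm_mul]
        congr 1
        simp
    _ = (q:ℝ)^n * ∑ a : Fin q, ‖weylF n Q q (a:ℕ) 0‖ := by rw [Finset.mul_sum]

/-! ### Reduction to coprime numerator/denominator -/

lemma eval_dvd_sub {n d : ℕ} (hd : 0 < d) (Q : MvPolynomial (Fin n) ℤ) (s t : Fin n → ℤ)
    (h : ∀ i, ((s i : ZMod d) = (t i : ZMod d))) :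
    (d:ℤ) ∣ (MvPolynomial.eval s Q - MvPolynomial.eval t Q) := by
  haveI : NeZero d := ⟨hd.ne'⟩
  rw [← ZMod.intCast_zmod_eq_zero_iff_dvd, Int.cast_sub, sub_eq_zero,
    ← eval_map_cast Q s, ← eval_map_cast Q t]
  have hfun : (fun i => ((s i : ZMod d))) = fun i => ((t i : ZMod d)) := funext h
  rw [hfun]

lemma key2 (n q : ℕ) (hq : 0 < q) (Q : MvPolynomial (Fin n) ℤ) (a : ℕ) :
    weylF n Q q (a:ℕ) 0 = weylF n Q (q / Nat.gcd a q) ((a / Nat.gcd a q : ℕ) : ℤ) 0 := by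
  classical
  set g := Nat.gcd a q with hgdef
  set d := q / g with hddef
  set b := a / g with hbdef
  have hg : 0 < g := Nat.gcd_pos_of_pos_right a hq
  have hdg : g * d = q := Nat.mul_div_cancel' (Nat.gcd_dvd_right a q)
  have hab : g * b = a := Nat.mul_div_cancel' (Nat.gcd_dvd_left a q)
  have hd : 0 < d := by
    rcases Nat.eq_zero_or_pos d with h0 | h0
    · rw [h0, mul_zero] at hdg; omega
    · exact h0
  set P : (Fin n → ℤ) → ℤ := fun s => MvPolynomial.eval s Q with hPdef
  set H : (Fin n → Fin d) → ℂ :=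
    fun t => e2pi ((((b:ℕ) * P (fun i => ((t i : ℕ) : ℤ)) : ℤ) : ℝ) / d) with hHdef
  set ed : Fin g × Fin d ≃ Fin q := finProdFinEquiv.trans (finCongr hdg) with heddef
  have hedval : ∀ x : Fin g × Fin d, ((ed x : Fin q) : ℕ) = (x.2 : ℕ) + d * (x.1 : ℕ) := by
    intro x
    simp [heddef, finProdFinEquiv_apply_val]
  set E : (Fin n → Fin g × Fin d) ≃ (Fin n → Fin q) :=
    Equiv.piCongrRight (fun _ => ed) with hEdef
  have claim : ∑ s : Fin n → Fin q,
      e2pi ((((a:ℕ) * P (fun i => ((s i : ℕ) : ℤ)) : ℤ) : ℝ) / q)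
      = ((g:ℂ))^n * ∑ t : Fin n → Fin d, H t := by
    have hexp : ∀ s : Fin n → Fin q,
        ((((a:ℕ) * P (fun i => ((s i : ℕ) : ℤ)) : ℤ) : ℝ) / q)
          = ((((b:ℕ) * P (fun i => ((s i : ℕ) : ℤ)) : ℤ) : ℝ) / d) := by
      intro s
      have hq' : (q:ℝ) = (g:ℝ) * d := by exact_mod_cast hdg.symm
      have ha' : (a:ℝ) = (g:ℝ) * b := by exact_mod_cast hab.symm
      have hg' : (g:ℝ) ≠ 0 := by positivity
      have hd' : (d:ℝ) ≠ 0 := by positivity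
      push_cast
      rw [hq', ha']
      field_simp
    rw [Finset.sum_congr rfl fun s _ => by rw [hexp s]]
    rw [← Equiv.sum_comp E (fun s => e2pi ((((b:ℕ) * P (fun i => ((s i : ℕ) : ℤ)) : ℤ) : ℝ) / d))]
    have hterm : ∀ p : Fin n → Fin g × Fin d,
        e2pi ((((b:ℕ) * P (fun i => (((E p) i : ℕ) : ℤ)) : ℤ) : ℝ) / d)
          = H (fun i => (p i).2) := by
      intro p
      have hcong : ∀ i, ((((E p) i : ℕ) : ℤ) : ZMod d) = ((((p i).2 : ℕ) : ℤ) : ZMod d) := by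
        intro i
        have : ((E p) i : ℕ) = ((p i).2 : ℕ) + d * ((p i).1 : ℕ) := hedval (p i)
        push_cast [this]
        simp [ZMod.natCast_self]
      obtain ⟨k, hk⟩ := eval_dvd_sub hd Q (fun i => (((E p) i : ℕ) : ℤ))
        (fun i => (((p i).2 : ℕ) : ℤ)) hcong
      have hPk : P (fun i => (((E p) i : ℕ) : ℤ)) = P (fun i => (((p i).2 : ℕ) : ℤ)) + d * k := by
        rw [hPdef]; dsimp only; linarith [hk]
      rw [hHdef]
      dsimp only
      have harg : ((((b:ℕ) * P (fun i => (((E p) i : ℕ) : ℤ)) : ℤ) : ℝ) / d)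
          = ((((b:ℕ) * P (fun i => (((p i).2 : ℕ) : ℤ)) : ℤ) : ℝ) / d) + ((b * k : ℤ) : ℝ) := by
        rw [hPk]
        have hd' : (d:ℝ) ≠ 0 := by positivity
        push_cast
        field_simp
      rw [harg, e2pi_add, e2pi_intCast, mul_one]
    rw [Finset.sum_congr rfl fun p _ => hterm p]
    have := Fintype.sum_equiv (Equiv.arrowProdEquivProdArrow (Fin n) (fun _ => Fin g) (fun _ => Fin d))
      (fun p : Fin n → Fin g × Fin d => H (fun i => (p i).2))
      (fun x : (Fin n → Fin g) × (Fin n → Fin d) => H x.2) (fun p => rfl)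
    rw [this, Fintype.sum_prod_type, Finset.sum_const (∑ t : Fin n → Fin d, H t),
      Finset.card_univ, Fintype.card_fun, Fintype.card_fin, Fintype.card_fin, nsmul_eq_mul]
    push_cast
    ring
  have hqc : ((q:ℂ))^n ≠ 0 := pow_ne_zero _ (Nat.cast_ne_zero.mpr hq.ne')
  have lhs := weylF_zero_eq n Q q hq a
  have rhs := weylF_zero_eq n Q d hd b
  have hqgd : ((q:ℂ))^n = (g:ℂ)^n * (d:ℂ)^n := by
    rw [← mul_pow]
    norm_cast
    rw [hdg]
  apply mul_left_cancel₀ hqc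
  rw [lhs, claim, ← rhs, hqgd]
  ring

/-! ### Trivial value at `d = 1` and the counting bound -/

lemma weylF_one (n : ℕ) (Q : MvPolynomial (Fin n) ℤ) : weylF n Q 1 0 0 = 1 := by
  simp [weylF, e2pi]

lemma count_bound (q : ℕ) (hq : 0 < q) (f : ℕ → ℝ) (hf : ∀ d, 0 ≤ f d) :
    ∑ a ∈ Finset.range q, f (q / Nat.gcd a q) ≤ ∑ d ∈ q.divisors, (d:ℝ) * f d := by
  classical
  set emb : ℕ → Σ _ : ℕ, ℕ := fun a => ⟨q / Nat.gcd a q, a / Nat.gcd a q⟩ with hemb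
  have hrec : ∀ a, Nat.gcd a q = q / (q / Nat.gcd a q) := by
    intro a
    rw [Nat.div_div_self (Nat.gcd_dvd_right a q) hq.ne']
  have hinj : ∀ x ∈ Finset.range q, ∀ y ∈ Finset.range q, emb x = emb y → x = y := by
    intro x _ y _ hxy
    rw [hemb] at hxy
    obtain ⟨h1, h2⟩ := Sigma.mk.inj_iff.mp hxy
    have hg : Nat.gcd x q = Nat.gcd y q := by rw [hrec x, hrec y, h1]
    have h2' : x / Nat.gcd x q = y / Nat.gcd y q := heq_iff_eq.mp h2
    have hx := Nat.div_mul_cancel (Nat.gcd_dvd_left x q)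
    have hy := Nat.div_mul_cancel (Nat.gcd_dvd_left y q)
    rw [← hx, ← hy, h2', hg]
  have hmem : ∀ a ∈ Finset.range q, emb a ∈ q.divisors.sigma (fun d => Finset.range d) := by
    intro a ha
    rw [Finset.mem_sigma]
    constructor
    · exact Nat.mem_divisors.mpr ⟨Nat.div_dvd_of_dvd (Nat.gcd_dvd_right a q), hq.ne'⟩
    · exact Finset.mem_range.mpr
        (Nat.div_lt_div_of_lt_of_dvd (Nat.gcd_dvd_right a q) (Finset.mem_range.mp ha))
  calc ∑ a ∈ Finset.range q, f (q / Nat.gcd a q)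
      = ∑ p ∈ (Finset.range q).image emb, f p.1 :=
        (Finset.sum_image (f := fun p : (Σ _ : ℕ, ℕ) => f p.1) (g := emb) hinj).symm
    _ ≤ ∑ p ∈ q.divisors.sigma (fun d => Finset.range d), f p.1 := by
        apply Finset.sum_le_sum_of_subset_of_nonneg
        · intro p hp
          obtain ⟨a, ha, rfl⟩ := Finset.mem_image.mp hp
          exact hmem a ha
        · intro p _ _; exact hf _
    _ = ∑ d ∈ q.divisors, ∑ b ∈ Finset.range d, f d := Finset.sum_sigma _ _ _
    _ = ∑ d ∈ q.divisors, (d:ℝ) * f d := by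
        refine Finset.sum_congr rfl fun d _ => ?_
        rw [Finset.sum_const, Finset.card_range, nsmul_eq_mul]

theorem stmt11 (β C₀ : ℝ) (hβ : 2 < β) (hC₀ : 1 ≤ C₀) :
    ∃ C' : ℝ,
      ∀ n : ℕ, 1 ≤ n → ∀ Q : MvPolynomial (Fin n) ℤ,
        (∀ q : ℕ, 2 ≤ q → ∀ a : ℕ, a < q → Nat.gcd a q = 1 →
          ‖weylF n Q q (a : ℤ) 0‖ ≤ C₀ * (q : ℝ) ^ (-β)) →
        ∀ q : ℕ, 1 ≤ q → ∀ lam : ℤ,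
          (Vcard n Q q lam : ℝ) ≤ C' * (q : ℝ) ^ (n - 1) := by
  classical
  set T : ℝ := ∑' d : ℕ, (d:ℝ) ^ (1 - β) with hT
  refine ⟨C₀ * T, ?_⟩
  intro n hn Q hQ q hq lam
  have hq0 : 0 < q := hq
  have hC0' : (0:ℝ) ≤ C₀ := by linarith
  have hsummable : Summable (fun d : ℕ => (d:ℝ) ^ (1 - β)) :=
    Real.summable_nat_rpow.mpr (by linarith)
  -- pointwise bound for all moduli (including 1)
  have hF' : ∀ d : ℕ, 0 < d → ∀ b : ℕ, b < d → Nat.gcd b d = 1 →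
      ‖weylF n Q d (b:ℤ) 0‖ ≤ C₀ * (d:ℝ) ^ (-β) := by
    intro d hd b hb hcop
    rcases lt_or_ge d 2 with h2 | h2
    · have hd1 : d = 1 := by omega
      have hb0 : b = 0 := by omega
      subst hd1; subst hb0
      have : ((0:ℕ):ℤ) = (0:ℤ) := rfl
      rw [this, weylF_one]
      simp only [Nat.cast_one, Real.one_rpow, mul_one, norm_one]
      linarith
    · exact hQ d h2 b hb hcop
  -- bound for each `a`
  have hA : ∀ a : Fin q, ‖weylF n Q q ((a:ℕ):ℤ) 0‖
      ≤ C₀ * ((q / Nat.gcd (a:ℕ) q : ℕ):ℝ) ^ (-β) := by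
    intro a
    have hg : 0 < Nat.gcd (a:ℕ) q := Nat.gcd_pos_of_pos_right _ hq0
    rw [key2 n q hq0 Q (a:ℕ)]
    refine hF' _ ?_ _ ?_ ?_
    · exact Nat.div_pos (Nat.le_of_dvd hq0 (Nat.gcd_dvd_right _ _)) hg
    · exact Nat.div_lt_div_of_lt_of_dvd (Nat.gcd_dvd_right _ _) a.2
    · exact Nat.coprime_div_gcd_div_gcd hg
  -- sum bound
  set f : ℕ → ℝ := fun d => C₀ * (d:ℝ) ^ (-β) with hf
  have hfnn : ∀ d, 0 ≤ f d := fun d => mul_nonneg hC0' (Real.rpow_nonneg (Nat.cast_nonneg _) _)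
  have hsum : ∑ a : Fin q, ‖weylF n Q q ((a:ℕ):ℤ) 0‖ ≤ C₀ * T := by
    calc ∑ a : Fin q, ‖weylF n Q q ((a:ℕ):ℤ) 0‖
        ≤ ∑ a : Fin q, f (q / Nat.gcd (a:ℕ) q) := Finset.sum_le_sum (fun a _ => hA a)
      _ = ∑ a ∈ Finset.range q, f (q / Nat.gcd a q) :=
          Fin.sum_univ_eq_sum_range (fun a => f (q / Nat.gcd a q)) q
      _ ≤ ∑ d ∈ q.divisors, (d:ℝ) * f d := count_bound q hq0 f hfnn
      _ = ∑ d ∈ q.divisors, C₀ * (d:ℝ) ^ (1 - β) := by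
          refine Finset.sum_congr rfl fun d hd => ?_
          have hdpos : 0 < d := Nat.pos_of_mem_divisors hd
          have hdr : (0:ℝ) < d := by exact_mod_cast hdpos
          rw [hf]
          have : (d:ℝ) ^ (1 - β) = (d:ℝ) ^ (1:ℝ) * (d:ℝ) ^ (-β) := by
            rw [← Real.rpow_add hdr]
            ring_nf
          rw [this, Real.rpow_one]
          ring
      _ = C₀ * ∑ d ∈ q.divisors, (d:ℝ) ^ (1 - β) := by rw [Finset.mul_sum]
      _ ≤ C₀ * T := by
          refine mul_le_mul_of_nonneg_left ?_ hC0'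
          exact Summable.sum_le_tsum _ (fun i _ => Real.rpow_nonneg (Nat.cast_nonneg _) _) hsummable
  -- combine
  have h1 := key1 n q hq0 Q lam
  have hqn : (q:ℝ)^n = (q:ℝ)^(n-1) * q := by
    conv_lhs => rw [show n = (n-1)+1 from (Nat.succ_pred_eq_of_pos hn).symm]
    rw [pow_succ]
  have hmain : (Vcard n Q q lam : ℝ) * q ≤ (C₀ * T * (q:ℝ)^(n-1)) * q := by
    calc (Vcard n Q q lam : ℝ) * q
        ≤ (q:ℝ)^n * ∑ a : Fin q, ‖weylF n Q q ((a:ℕ):ℤ) 0‖ := h1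
      _ ≤ (q:ℝ)^n * (C₀ * T) := by
          refine mul_le_mul_of_nonneg_left hsum (by positivity)
      _ = (C₀ * T * (q:ℝ)^(n-1)) * q := by rw [hqn]; ring
  have hqr : (0:ℝ) < q := by exact_mod_cast hq0
  exact le_of_mul_le_mul_right hmain hqr
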